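/- Let X be an infinite finitely supported subset of an invariant set Y. Then ℘_fs(℘_fin(X)), the set of finitely supported subsets of the finite powerset of X, contains an infinite uniformly supported subset; specifically, the family (X_i)_{i∈ℕ}, where X_i is the set of all i-element subsets of X, is an infinite family of distinct elements all supported by supp(X). -/

import Mathlib

open Pointwise

/-- The group of finitary permutations of the set `A` of atoms:
bijections of `A` that move only finitely many atoms. -/
def finPerm (A : Type*) : Subgroup (Equiv.Perm A) where
  carrier := {π | {a | π a ≠ a}.Finite}
  one_mem' := by simp
  mul_mem' := by
    intro π σ hπ hσ
    apply Set.Finite.subset (hπ.union hσ)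
    intro a ha
    by_contra hc
    simp only [Set.mem_union, Set.mem_setOf_eq, not_or, not_not] at hc
    exact ha (by simp [Equiv.Perm.mul_apply, hc.1, hc.2])
  inv_mem' := by
    intro π hπ
    apply Set.Finite.subset hπ
    intro a ha
    simp only [Set.mem_setOf_eq] at ha ⊢
    intro h
    exact ha (Equiv.Perm.inv_eq_iff_eq.mpr h.symm)

/-- `x` is finitely supported: some finite set of atoms supports it. -/
def FinitelySupported (A : Type*) {X : Type*} [MulAction (finPerm A) X] (x : X) : Prop :=
  ∃ S : Set A, S.Finite ∧ MulAction.Supports (finPerm A) S x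

/-- A subset `Z` of an `S_A`-set is uniformly supported if a single finite set
of atoms supports every element of `Z`. -/
def UniformlySupported (A : Type*) {X : Type*} [MulAction (finPerm A) X] (Z : Set X) : Prop :=
  ∃ S : Set A, S.Finite ∧ ∀ x ∈ Z, MulAction.Supports (finPerm A) S x

/-- The least support of `x`: the intersection of all finite sets of atoms supporting `x`. -/
noncomputable def supp (A : Type*) {X : Type*} [MulAction (finPerm A) X] (x : X) : Set A :=
  ⋂₀ {S : Set A | S.Finite ∧ MulAction.Supports (finPerm A) S x}

/-- `Z` contains no infinite uniformly supported subset
(`Z` is "FSM non-uniformly infinite"). -/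
def NoInfUS (A : Type*) {X : Type*} [MulAction (finPerm A) X] (Z : Set X) : Prop :=
  ∀ W ⊆ Z, UniformlySupported A W → W.Finite

/-- The uniform powerset `℘_us(X)`: all uniformly supported subsets of `X`. -/
def usPowerset (A : Type*) {X : Type*} [MulAction (finPerm A) X] (Z : Set X) : Set (Set X) :=
  {W | W ⊆ Z ∧ UniformlySupported A W}

/-- The finite powerset `℘_fin(X)`: all finite subsets of `X`. -/
def finPowerset {X : Type*} (Z : Set X) : Set (Set X) :=
  {W | W ⊆ Z ∧ W.Finite}

/-- `S` supports the function `f` on the domain `X` (Proposition 2.18'(2)):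
for every `π` fixing `S` pointwise and every `x ∈ X`, `π • x ∈ X` and
`f (π • x) = π • f x`. -/
def FnSupportsOn (A : Type*) {Y : Type*} [MulAction (finPerm A) Y]
    (X : Set Y) (S : Set A) (f : Y → Y) : Prop :=
  ∀ π : finPerm A, (∀ a ∈ S, π • a = a) → ∀ x ∈ X, π • x ∈ X ∧ f (π • x) = π • f x

/-- The least support of a function `f` with domain `X`. -/
noncomputable def fnSupp (A : Type*) {Y : Type*} [MulAction (finPerm A) Y]
    (X : Set Y) (f : Y → Y) : Set A :=
  ⋂₀ {S : Set A | S.Finite ∧ FnSupportsOn A X S f}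


section Aux

variable {A Y : Type*} [Infinite A] [MulAction (finPerm A) Y]

set_option linter.unusedSectionVars false

/-- The transposition of two atoms, as a finitary permutation. -/
def fswap [DecidableEq A] (a b : A) : finPerm A :=
  ⟨Equiv.swap a b, Set.Finite.subset ((Set.finite_singleton b).insert a) (by
    intro x hx
    simp only [Set.mem_setOf_eq] at hx
    by_contra h
    simp only [Set.mem_insert_iff, Set.mem_singleton_iff, not_or] at h
    exact hx (Equiv.swap_apply_of_ne_of_ne h.1 h.2))⟩

lemma finPerm_smul_atom (π : finPerm A) (a : A) : π • a = (π : Equiv.Perm A) a := rfl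

lemma fswap_coe [DecidableEq A] (a b : A) :
    ((fswap a b : finPerm A) : Equiv.Perm A) = Equiv.swap a b := rfl

lemma swap_smul_fix [DecidableEq A] {x : Y} {S1 S2 : Set A} (hf1 : S1.Finite) (hf2 : S2.Finite)
    (h1 : MulAction.Supports (finPerm A) S1 x) (h2 : MulAction.Supports (finPerm A) S2 x)
    {a b : A} (ha : a ∉ S1 ∩ S2) (hb : b ∉ S1 ∩ S2) : fswap a b • x = x := by
  classical
  rcases eq_or_ne a b with rfl | hab
  · have : (fswap a a : finPerm A) = 1 := by
      apply Subtype.ext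
      simp [fswap_coe, Equiv.swap_self]
      rfl
    rw [this, one_smul]
  have key1 : ∀ u v : A, u ∉ S1 → v ∉ S1 → (fswap u v : finPerm A) • x = x := by
    intro u v hu hv
    apply h1
    intro c hc
    rw [finPerm_smul_atom, fswap_coe]
    refine Equiv.swap_apply_of_ne_of_ne ?_ ?_
    · rintro rfl; exact hu hc
    · rintro rfl; exact hv hc
  have key2 : ∀ u v : A, u ∉ S2 → v ∉ S2 → (fswap u v : finPerm A) • x = x := by
    intro u v hu hv
    apply h2
    intro c hc
    rw [finPerm_smul_atom, fswap_coe]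
    refine Equiv.swap_apply_of_ne_of_ne ?_ ?_
    · rintro rfl; exact hu hc
    · rintro rfl; exact hv hc
  -- mixed case helper
  have mixed : ∀ u v : A, u ≠ v → u ∉ S1 → u ∈ S2 → v ∈ S1 → v ∉ S2 →
      (fswap u v : finPerm A) • x = x := by
    intro u v huv hu1 hu2 hv1 hv2
    obtain ⟨c, hc⟩ := ((hf1.union hf2).infinite_compl).nonempty
    simp only [Set.mem_compl_iff, Set.mem_union, not_or] at hc
    have hvc : v ≠ c := fun h => hc.1 (h ▸ hv1)
    have huc : u ≠ c := fun h => hc.2 (h ▸ hu2)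
    have E2 : (fswap u v : finPerm A) = fswap u c * fswap v c * fswap u c := by
      apply Subtype.ext
      simp only [Subgroup.coe_mul, fswap_coe]
      ext z
      simp only [Equiv.Perm.mul_apply, Equiv.swap_apply_def]
      split_ifs <;> simp_all
    rw [E2, mul_smul, mul_smul, key1 u c hu1 hc.1, key2 v c hv2 hc.2, key1 u c hu1 hc.1]
  simp only [Set.mem_inter_iff, not_and_or] at ha hb
  rcases ha with ha | ha <;> rcases hb with hb | hb
  · exact key1 a b ha hb
  · by_cases ha2 : a ∈ S2
    · by_cases hb1 : b ∈ S1
      · exact mixed a b hab ha ha2 hb1 hb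
      · exact key1 a b ha hb1
    · exact key2 a b ha2 hb
  · by_cases hb2 : b ∈ S2
    · by_cases ha1 : a ∈ S1
      · have := mixed b a hab.symm hb hb2 ha1 ha
        rwa [show (fswap b a : finPerm A) = fswap a b from
          Subtype.ext (by rw [fswap_coe, fswap_coe, Equiv.swap_comm])] at this
      · exact key1 a b ha1 hb
    · exact key2 a b ha hb2
  · exact key2 a b ha hb

lemma inter_supports [DecidableEq A] {x : Y} {S1 S2 : Set A} (hf1 : S1.Finite) (hf2 : S2.Finite)
    (h1 : MulAction.Supports (finPerm A) S1 x) (h2 : MulAction.Supports (finPerm A) S2 x) :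
    MulAction.Supports (finPerm A) (S1 ∩ S2) x := by
  classical
  suffices H : ∀ n : ℕ, ∀ π : finPerm A, {a | (π : Equiv.Perm A) a ≠ a}.ncard ≤ n →
      (∀ a ∈ S1 ∩ S2, π • a = a) → π • x = x by
    intro π hπ
    exact H {a | (π : Equiv.Perm A) a ≠ a}.ncard π le_rfl hπ
  intro n
  induction n with
  | zero =>
    intro π hπ hfix
    have hfin : {a | (π : Equiv.Perm A) a ≠ a}.Finite := π.2
    have : {a | (π : Equiv.Perm A) a ≠ a} = ∅ := by
      rw [← Set.ncard_eq_zero hfin]; omega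
    have hπ1 : π = 1 := by
      apply Subtype.ext
      apply Equiv.ext
      intro c
      by_contra h
      exact (Set.eq_empty_iff_forall_notMem.mp this c) h
    rw [hπ1, one_smul]
  | succ n ih =>
    intro π hπ hfix
    by_cases hmv : {a | (π : Equiv.Perm A) a ≠ a} = ∅
    · have hπ1 : π = 1 := by
        apply Subtype.ext; apply Equiv.ext; intro c
        by_contra h
        exact (Set.eq_empty_iff_forall_notMem.mp hmv c) h
      rw [hπ1, one_smul]
    obtain ⟨a, ha⟩ := Set.nonempty_iff_ne_empty.mpr hmv
    simp only [Set.mem_setOf_eq] at ha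
    set b := (π : Equiv.Perm A) a with hb
    have hab : a ≠ b := fun h => ha h.symm
    have hbfix : (π : Equiv.Perm A) b ≠ b := by
      intro h
      exact hab ((π : Equiv.Perm A).injective (h.trans hb)).symm
    -- a and b are not in S1 ∩ S2
    have haS : a ∉ S1 ∩ S2 := fun h => ha (hfix a h)
    have hbS : b ∉ S1 ∩ S2 := fun h => hbfix (hfix b h)
    set π' : finPerm A := fswap a b * π with hπ'
    have hπ'c : ∀ c, (π' : Equiv.Perm A) c = Equiv.swap a b ((π : Equiv.Perm A) c) := by
      intro c; rfl
    have hsub : {c | (π' : Equiv.Perm A) c ≠ c} ⊆ {c | (π : Equiv.Perm A) c ≠ c} \ {a} := by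
      intro c hc
      simp only [Set.mem_setOf_eq, hπ'c] at hc
      rcases eq_or_ne c a with rfl | hca
      · exact absurd (by rw [← hb, Equiv.swap_apply_right]) hc
      constructor
      · simp only [Set.mem_setOf_eq]
        intro h
        apply hc
        rw [h]
        apply Equiv.swap_apply_of_ne_of_ne hca
        intro h'
        exact hca ((π : Equiv.Perm A).injective (h.trans (h'.trans hb)))
      · simpa using hca
    have hfin : {c | (π : Equiv.Perm A) c ≠ c}.Finite := π.2
    have hcard : {c | (π' : Equiv.Perm A) c ≠ c}.ncard ≤ n := by
      have h1 : {c | (π' : Equiv.Perm A) c ≠ c}.ncard ≤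
          ({c | (π : Equiv.Perm A) c ≠ c} \ {a}).ncard :=
        Set.ncard_le_ncard hsub hfin.diff
      have h2 : ({c | (π : Equiv.Perm A) c ≠ c} \ {a}).ncard <
          {c | (π : Equiv.Perm A) c ≠ c}.ncard :=
        Set.ncard_diff_singleton_lt_of_mem ha hfin
      omega
    have hfix' : ∀ c ∈ S1 ∩ S2, π' • c = c := by
      intro c hc
      have hcfix : (π : Equiv.Perm A) c = c := hfix c hc
      rw [finPerm_smul_atom, hπ'c, hcfix]
      apply Equiv.swap_apply_of_ne_of_ne
      · intro h
        apply ha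
        rw [hb, ← h]
        exact hcfix
      · intro h
        have hca : c = a := (π : Equiv.Perm A).injective (hcfix.trans (h.trans hb))
        exact hab (hca.symm.trans h)
    have hx' : π' • x = x := ih π' hcard hfix'
    have hswap : (fswap a b : finPerm A) • x = x :=
      swap_smul_fix hf1 hf2 h1 h2 haS hbS
    have : (fswap a b : finPerm A) • (π • x) = (fswap a b : finPerm A) • x := by
      rw [← mul_smul, ← hπ', hx', hswap]
    exact smul_left_cancel _ this

lemma supp_finite_and_supports (x : Y) (hx : FinitelySupported A x) :
    (supp A x).Finite ∧ MulAction.Supports (finPerm A) (supp A x) x := by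
  classical
  obtain ⟨S, hSf, hS⟩ := hx
  set F : Set (Set A) := {T | T ⊆ S ∧ MulAction.Supports (finPerm A) T x} with hF
  have hSF : S ∈ F := ⟨subset_rfl, hS⟩
  have hne : {n | ∃ T ∈ F, T.ncard = n}.Nonempty := ⟨S.ncard, S, hSF, rfl⟩
  obtain ⟨T0, hT0F, hT0card⟩ := Nat.sInf_mem hne
  have hmin : ∀ T ∈ F, T0.ncard ≤ T.ncard := by
    intro T hT
    rw [hT0card]
    exact Nat.sInf_le ⟨T, hT, rfl⟩
  have hT0fin : T0.Finite := hSf.subset hT0F.1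
  have key : ∀ T : Set A, T.Finite → MulAction.Supports (finPerm A) T x → T0 ⊆ T := by
    intro T hTf hTs
    have hint : MulAction.Supports (finPerm A) (T0 ∩ T) x :=
      inter_supports hT0fin hTf hT0F.2 hTs
    have hmem : T0 ∩ T ∈ F := ⟨Set.inter_subset_left.trans hT0F.1, hint⟩
    have hle := hmin _ hmem
    have heq : T0 ∩ T = T0 :=
      Set.eq_of_subset_of_ncard_le Set.inter_subset_left hle hT0fin
    rw [← heq]
    exact Set.inter_subset_right
  have hsupp : supp A x = T0 := by
    apply Set.Subset.antisymm
    · exact Set.sInter_subset_of_mem ⟨hT0fin, hT0F.2⟩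
    · exact Set.subset_sInter fun T hT => key T hT.1 hT.2
  rw [hsupp]
  exact ⟨hT0fin, hT0F.2⟩

end Aux

/-- for `X` an infinite finitely supported subset of an invariant set `Y`,
the family `(X_i)`, where `X_i` is the set of all `i`-element subsets of `X`, is an
infinite family of distinct elements of `℘_fs(℘_fin(X))`, all supported by `supp(X)`;
hence `℘_fs(℘_fin(X))` contains an infinite uniformly supported subset. -/
theorem stmt9 {A Y : Type*} [Infinite A] [MulAction (finPerm A) Y]
    (hinv : ∀ y : Y, FinitelySupported A y) (X : Set Y)
    (hX : FinitelySupported A X) (hXinf : X.Infinite) :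
    Function.Injective (fun i : ℕ => {Z : Set Y | Z ⊆ X ∧ Z.Finite ∧ Z.ncard = i}) ∧
    (∀ i : ℕ, MulAction.Supports (finPerm A) (supp A X)
        ({Z : Set Y | Z ⊆ X ∧ Z.Finite ∧ Z.ncard = i} : Set (Set Y))) ∧
    (∀ i : ℕ, FinitelySupported A
        ({Z : Set Y | Z ⊆ X ∧ Z.Finite ∧ Z.ncard = i} : Set (Set Y)) ∧
      {Z : Set Y | Z ⊆ X ∧ Z.Finite ∧ Z.ncard = i} ⊆ finPowerset X) ∧
    (Set.range (fun i : ℕ => {Z : Set Y | Z ⊆ X ∧ Z.Finite ∧ Z.ncard = i})).Infinite ∧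
    UniformlySupported A
      (Set.range (fun i : ℕ => {Z : Set Y | Z ⊆ X ∧ Z.Finite ∧ Z.ncard = i})) := by
  classical
  obtain ⟨hsuppfin, hsuppsupp⟩ := supp_finite_and_supports (A := A) X hX
  set Xi : ℕ → Set (Set Y) := fun i => {Z : Set Y | Z ⊆ X ∧ Z.Finite ∧ Z.ncard = i} with hXi
  -- any permutation fixing X maps Xi i into itself
  have hmono : ∀ (i : ℕ) (σ : finPerm A), σ • X = X → σ • Xi i ⊆ Xi i := by
    intro i σ hσ Z hZ
    rw [Set.mem_smul_set] at hZ
    obtain ⟨W, hW, rfl⟩ := hZ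
    refine ⟨?_, ?_, ?_⟩
    · rw [← hσ]
      exact Set.smul_set_mono hW.1
    · exact hW.2.1.smul_set
    · rw [Set.ncard_smul_set]
      exact hW.2.2
  have hsupports : ∀ i : ℕ, MulAction.Supports (finPerm A) (supp A X) (Xi i) := by
    intro i π hπ
    have hπinv : ∀ a ∈ supp A X, π⁻¹ • a = a := by
      intro a ha
      rw [inv_smul_eq_iff]
      exact (hπ ha).symm
    have hX1 : π • X = X := hsuppsupp π hπ
    have hX2 : π⁻¹ • X = X := hsuppsupp π⁻¹ hπinv
    apply Set.Subset.antisymm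
    · exact hmono i π hX1
    · intro Z hZ
      have h1 : π⁻¹ • Xi i ⊆ Xi i := hmono i π⁻¹ hX2
      have h2 : π • (π⁻¹ • Xi i) ⊆ π • Xi i := Set.smul_set_mono h1
      rw [smul_inv_smul] at h2
      exact h2 hZ
  have hinj : Function.Injective Xi := by
    intro i j h
    obtain ⟨t, hts, htc⟩ := hXinf.exists_subset_card_eq i
    have hmem : (↑t : Set Y) ∈ Xi i := ⟨hts, t.finite_toSet, by simp [Set.ncard_coe_finset, htc]⟩
    have hmem' : (↑t : Set Y) ∈ Xi j := h ▸ hmem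
    rw [← htc, ← Set.ncard_coe_finset]
    exact hmem'.2.2
  refine ⟨hinj, hsupports, ?_, ?_, ?_⟩
  · intro i
    refine ⟨⟨supp A X, hsuppfin, hsupports i⟩, ?_⟩
    intro Z hZ
    exact ⟨hZ.1, hZ.2.1⟩
  · exact Set.infinite_range_of_injective hinj
  · refine ⟨supp A X, hsuppfin, ?_⟩
    rintro W ⟨i, rfl⟩
    exact hsupports i
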